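/- arXiv:2502.08530 — 3 statements merged into one kernel-verified Lean document; each statement's English description precedes it below -/
import Mathlib

section
/- Let (C, v) ⊆ (L, v) ⊆ (M, v) be extensions of valued fields such that L has the separated basis property over C and M has the separated basis property over L. Then M has the separated basis property over C. -/
/-!
STATEMENT 1: Transitivity of the separated basis property: if L/C and M/L are
separated extensions of valued fields, then so is M/C.

We realize C ⊆ L ⊆ M as subfields `C ≤ L` of an ambient valued field `M`,
with a multiplicative valuation `v : Valuation M Γ`.
"L has the separated basis property over C" is phrased as: every
finite-dimensional C-subspace of M contained in L has a separated C-basis.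
-/

variable {M Γ : Type*} [Field M] [LinearOrderedCommGroupWithZero Γ]

instance : OrderBot Γ where
  bot := 0
  bot_le := fun _ => zero_le'

/-- The tuple `b` is separated over the subfield `C`. -/
def Valuation.IsSeparatedTuple (v : Valuation M Γ) (C : Subfield M) {n : ℕ} (b : Fin n → M) :
    Prop :=
  ∀ c : Fin n → C, v (∑ i, (c i : M) * b i) = Finset.univ.sup fun i => v (c i : M) * v (b i)

lemma sf_smul (C : Subfield M) (c : C) (x : M) : c • x = (c : M) * x := rfl

lemma sup_mul_right {α : Type*} (s : Finset α) (f : α → Γ) (γ : Γ) :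
    s.sup f * γ = s.sup fun a => f a * γ := by
  classical
  induction s using Finset.induction with
  | empty => show (0:Γ) * γ = 0; simp
  | insert _ _ h ih =>
    rw [Finset.sup_insert, Finset.sup_insert, ← ih]
    exact Monotone.map_max (fun a b hab => mul_le_mul_left hab γ)

lemma sup_univ_succAbove {n : ℕ} (g : Fin (n + 1) → Γ) (i : Fin (n + 1)) :
    Finset.univ.sup g = g i ⊔ Finset.univ.sup fun j => g (i.succAbove j) := by
  apply le_antisymm
  · refine Finset.sup_le fun j _ => ?_
    rcases eq_or_ne j i with rfl | hji
    · exact le_sup_left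
    · obtain ⟨k, hk⟩ := Fin.exists_succAbove_eq hji
      calc g j = g (i.succAbove k) := by rw [hk]
        _ ≤ _ := le_trans
            (Finset.le_sup (f := fun t => g (i.succAbove t)) (Finset.mem_univ k)) le_sup_right
  · exact sup_le (Finset.le_sup (Finset.mem_univ i))
      (Finset.sup_le fun j _ => Finset.le_sup (Finset.mem_univ _))

lemma sup_univ_equiv {α β : Type*} [Fintype α] [Fintype β] (σ : α ≃ β) (G : β → Γ) :
    (Finset.univ.sup fun a => G (σ a)) = Finset.univ.sup G := by
  apply le_antisymm
  · exact Finset.sup_le fun a _ => Finset.le_sup (Finset.mem_univ _)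
  · refine Finset.sup_le fun b _ => ?_
    have := Finset.le_sup (f := fun a => G (σ a)) (Finset.mem_univ (σ.symm b))
    simpa using this

lemma linearIndependent_of_separated (v : Valuation M Γ) (C : Subfield M) {n : ℕ}
    {b : Fin n → M} (hb : ∀ i, b i ≠ 0) (hsep : v.IsSeparatedTuple C b) :
    LinearIndependent C b := by
  rw [Fintype.linearIndependent_iff]
  intro g hg i
  have h0 : v (∑ j, (g j : M) * b j) = 0 := by
    simp only [sf_smul] at hg
    rw [hg, map_zero]
  rw [hsep g] at h0
  have hi : v (g i : M) * v (b i) ≤ 0 := by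
    rw [← h0]
    exact Finset.le_sup (f := fun j => v (g j : M) * v (b j)) (Finset.mem_univ i)
  rw [le_zero_iff, mul_eq_zero] at hi
  rcases hi with h | h
  · have : (g i : M) = 0 := by simpa using h
    exact_mod_cast this
  · exact absurd (by simpa using h) (hb i)

lemma subspace_separated (v : Valuation M Γ) (C : Subfield M) :
    ∀ (n : ℕ) (b : Fin n → M), (∀ i, b i ≠ 0) → v.IsSeparatedTuple C b →
    ∀ V : Submodule C M, V ≤ Submodule.span C (Set.range b) →
    ∃ (k : ℕ) (d : Fin k → M), LinearIndependent C d ∧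
      Submodule.span C (Set.range d) = V ∧ v.IsSeparatedTuple C d := by
  intro n
  induction n with
  | zero =>
    intro b _ _ V hV
    refine ⟨0, Fin.elim0, linearIndependent_empty_type, ?_, ?_⟩
    · have hbot : V = ⊥ := by
        rw [← le_bot_iff]
        refine le_trans hV ?_
        rw [Set.range_eq_empty, Submodule.span_empty]
      rw [hbot, Set.range_eq_empty, Submodule.span_empty]
    · intro c
      rw [show ((∑ i : Fin 0, (c i : M) * Fin.elim0 i) = 0) from by simp, map_zero]
      simp
      rfl
  | succ n IH =>
    intro b hb0 hsep V hV
    by_cases hVbot : V = ⊥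
    · refine ⟨0, Fin.elim0, linearIndependent_empty_type, ?_, ?_⟩
      · rw [hVbot, Set.range_eq_empty, Submodule.span_empty]
      · intro c
        rw [show ((∑ i : Fin 0, (c i : M) * Fin.elim0 i) = 0) from by simp, map_zero]
        simp
        rfl
    obtain ⟨x, hxV, hx0⟩ := Submodule.exists_mem_ne_zero_of_ne_bot hVbot
    obtain ⟨c, hc⟩ := (Submodule.mem_span_range_iff_exists_fun C).1 (hV hxV)
    simp only [sf_smul] at hc
    have hvx : v x = Finset.univ.sup fun i => v (c i : M) * v (b i) := by
      rw [← hc]; exact hsep c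
    obtain ⟨i, _, hi⟩ := Finset.exists_mem_eq_sup Finset.univ Finset.univ_nonempty
      (fun i => v (c i : M) * v (b i))
    have hvxi : v x = v (c i : M) * v (b i) := hvx.trans hi
    have hvx0 : v x ≠ 0 := by simpa using hx0
    have hci : (c i : M) ≠ 0 := by
      intro h
      apply hvx0
      rw [hvxi, h, map_zero, zero_mul]
    set b' : Fin n → M := fun j => b (i.succAbove j) with hb'
    have hb'0 : ∀ j, b' j ≠ 0 := fun j => hb0 _
    -- any insertNth-0 coefficient family computes sums/sups over b'
    have hins : ∀ e : Fin n → C,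
        (∑ j, (((Fin.insertNth i (0 : C) e : Fin (n+1) → C) j) : M) * b j) = ∑ j, (e j : M) * b' j := by
      intro e
      rw [Fin.sum_univ_succAbove (fun j => (((Fin.insertNth i (0 : C) e : Fin (n+1) → C) j) : M) * b j) i]
      simp [hb']
    have hsep' : v.IsSeparatedTuple C b' := by
      intro e
      have h1 := hsep ((Fin.insertNth i (0 : C) e : Fin (n+1) → C))
      rw [hins e] at h1
      rw [h1, sup_univ_succAbove (fun j => v (((Fin.insertNth i (0 : C) e : Fin (n+1) → C) j) : M) * v (b j)) i]
      simp [hb']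
    set V₀ : Submodule C M := V ⊓ Submodule.span C (Set.range b') with hV₀
    obtain ⟨k, d, hdli, hdspan, hdsep⟩ := IH b' hb'0 hsep' V₀ inf_le_right
    -- key valuation property
    have key : ∀ z ∈ Submodule.span C (Set.range b'), v x ≤ v (x + z) := by
      intro z hz
      obtain ⟨e, he⟩ := (Submodule.mem_span_range_iff_exists_fun C).1 hz
      simp only [sf_smul] at he
      have hz' : (∑ j, (((Fin.insertNth i (0 : C) e : Fin (n+1) → C) j) : M) * b j) = z := by rw [hins e, he]
      have h2 := hsep (fun j => c j + (Fin.insertNth i (0 : C) e : Fin (n+1) → C) j)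
      have hxz : (∑ j, (((c j + (Fin.insertNth i (0 : C) e : Fin (n+1) → C) j : C)) : M) * b j) = x + z := by
        rw [← hc, ← hz', ← Finset.sum_add_distrib]
        congr 1; funext j; push_cast; ring
      rw [hxz] at h2
      rw [h2, hvxi]
      have h3 : v (((c i + (Fin.insertNth i (0 : C) e : Fin (n+1) → C) i : C)) : M) * v (b i) ≤ _ :=
        Finset.le_sup (f := fun j => v (((c j + (Fin.insertNth i (0 : C) e : Fin (n+1) → C) j : C)) : M) * v (b j))
          (Finset.mem_univ i)
      simpa using h3
    have hkey' : ∀ z ∈ Submodule.span C (Set.range b'), v (x + z) = max (v x) (v z) := by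
      intro z hz
      rcases le_or_gt (v z) (v x) with h | h
      · rw [max_eq_left h]
        exact le_antisymm (le_trans (v.map_add x z) (by simp [h])) (key z hz)
      · rw [max_eq_right h.le]
        exact v.map_add_eq_of_lt_right h
    -- the new tuple
    set dx : Fin (k + 1) → M := Fin.snoc d x with hdx
    have hdx0 : ∀ j, dx j ≠ 0 := by
      intro j
      induction j using Fin.lastCases with
      | last => simpa [hdx] using hx0
      | cast t =>
        simp only [hdx, Fin.snoc_castSucc]
        exact hdli.ne_zero t
    have hdmem : ∀ t, d t ∈ V₀ := by
      intro t
      rw [← hdspan]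
      exact Submodule.subset_span (Set.mem_range_self t)
    have hdxsep : v.IsSeparatedTuple C dx := by
      intro a
      have hsum : (∑ j, (a j : M) * dx j)
          = (∑ t : Fin k, (a t.castSucc : M) * d t) + (a (Fin.last k) : M) * x := by
        rw [Fin.sum_univ_castSucc (fun j => (a j : M) * dx j)]
        simp [hdx]
      have hsup : (Finset.univ.sup fun j => v (a j : M) * v (dx j))
          = (Finset.univ.sup fun t : Fin k => v (a t.castSucc : M) * v (d t))
            ⊔ v (a (Fin.last k) : M) * v x := by
        rw [sup_univ_succAbove (fun j => v (a j : M) * v (dx j)) (Fin.last k)]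
        simp only [hdx, Fin.succAbove_last, Fin.snoc_last, Fin.snoc_castSucc]
        exact sup_comm _ _
      by_cases ha : a (Fin.last k) = 0
      · rw [hsum, hsup, ha]
        simp only [ZeroMemClass.coe_zero, map_zero, zero_mul, mul_zero, add_zero]
        rw [hdsep (fun t => a t.castSucc)]
        simp
      · set a0 : C := a (Fin.last k) with ha0
        have ha0M : (a0 : M) ≠ 0 := by
          simpa using ha
        set z : M := ∑ t : Fin k, ((a t.castSucc / a0 : C) : M) * d t with hzdef
        have hzmem : z ∈ Submodule.span C (Set.range d) := by
          rw [Submodule.mem_span_range_iff_exists_fun C]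
          exact ⟨fun t => a t.castSucc / a0, rfl⟩
        have hzb' : z ∈ Submodule.span C (Set.range b') := by
          have : z ∈ V₀ := hdspan ▸ hzmem
          exact (inf_le_right : V₀ ≤ _) this
        have hmul : (a0 : M) * (x + z) = ∑ j, (a j : M) * dx j := by
          rw [hsum, hzdef, mul_add, Finset.mul_sum]
          have ht : ∀ t : Fin k, (a0 : M) * (((a t.castSucc / a0 : C) : M) * d t)
              = (a t.castSucc : M) * d t := by
            intro t; push_cast; field_simp
          rw [Finset.sum_congr rfl (fun t _ => ht t)]
          ring
        have hvz : v ((a0 : M)) * v z = Finset.univ.sup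
            fun t : Fin k => v (a t.castSucc : M) * v (d t) := by
          rw [← v.map_mul, hzdef, Finset.mul_sum]
          have ht2 : ∀ t : Fin k, (a0 : M) * (((a t.castSucc / a0 : C) : M) * d t)
              = (a t.castSucc : M) * d t := by
            intro t; push_cast; field_simp
          rw [Finset.sum_congr rfl (fun t _ => ht2 t), hdsep (fun t => a t.castSucc)]
        rw [← hmul, v.map_mul, hkey' z hzb', hsup]
        have hdist : v ((a0 : M)) * (v x ⊔ v z) = (v ((a0:M)) * v x) ⊔ (v ((a0:M)) * v z) :=
          Monotone.map_max (fun _ _ h => mul_le_mul_right h _)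
        rw [hdist, hvz, sup_comm]
      -- end hdxsep
    refine ⟨k + 1, dx, linearIndependent_of_separated v C hdx0 hdxsep, ?_, hdxsep⟩
    apply le_antisymm
    · rw [Submodule.span_le]
      rintro _ ⟨j, rfl⟩
      induction j using Fin.lastCases with
      | last => simpa [hdx] using hxV
      | cast t =>
        simp only [hdx, Fin.snoc_castSucc]
        exact (inf_le_left : V₀ ≤ V) (hdmem t)
    · intro y hyV
      obtain ⟨f, hf⟩ := (Submodule.mem_span_range_iff_exists_fun C).1 (hV hyV)
      simp only [sf_smul] at hf
      set a : C := f i / c i with ha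
      have hxspan : x ∈ Submodule.span C (Set.range dx) := by
        apply Submodule.subset_span
        exact ⟨Fin.last k, by simp [hdx]⟩
      have hyax : y - a • x ∈ Submodule.span C (Set.range b') := by
        have hexp : y - (a : M) * x = ∑ j, ((f j - a * c j : C) : M) * b j := by
          rw [← hf, ← hc, Finset.mul_sum, ← Finset.sum_sub_distrib]
          congr 1; funext j; push_cast; ring
        rw [Submodule.mem_span_range_iff_exists_fun C]
        refine ⟨fun t => f (i.succAbove t) - a * c (i.succAbove t), ?_⟩
        simp only [sf_smul]
        rw [hexp, Fin.sum_univ_succAbove (fun j => ((f j - a * c j : C) : M) * b j) i]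
        have : ((f i - a * c i : C) : M) = 0 := by
          have : f i - a * c i = 0 := by
            rw [ha]
            have hciC : (c i) ≠ (0 : C) := fun h => hci (by rw [h]; rfl)
            field_simp; simp
          rw [this]; rfl
        rw [this, zero_mul, zero_add]
      have hy0 : y - a • x ∈ V₀ := by
        refine ⟨?_, hyax⟩
        exact Submodule.sub_mem V hyV (Submodule.smul_mem V a hxV)
      have : y - a • x ∈ Submodule.span C (Set.range dx) := by
        apply Submodule.span_mono (Set.range_subset_iff.2 ?_) (hdspan ▸ hy0 : _)
        intro t
        exact ⟨t.castSucc, by simp [hdx]⟩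
      have := Submodule.add_mem _ this (Submodule.smul_mem _ a hxspan)
      simpa using this

set_option maxHeartbeats 2000000 in
set_option synthInstance.maxHeartbeats 400000 in
theorem separated_basis_property_transitive
    (v : Valuation M Γ) (C L : Subfield M) (hCL : C ≤ L)
    (hLC : ∀ V : Submodule C M, FiniteDimensional C V → (V : Set M) ⊆ (L : Set M) →
      ∃ (n : ℕ) (b : Fin n → M), LinearIndependent C b ∧
        Submodule.span C (Set.range b) = V ∧ v.IsSeparatedTuple C b)
    (hML : ∀ V : Submodule L M, FiniteDimensional L V →
      ∃ (n : ℕ) (b : Fin n → M), LinearIndependent L b ∧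
        Submodule.span L (Set.range b) = V ∧ v.IsSeparatedTuple L b) :
    ∀ V : Submodule C M, FiniteDimensional C V →
      ∃ (n : ℕ) (b : Fin n → M), LinearIndependent C b ∧
        Submodule.span C (Set.range b) = V ∧ v.IsSeparatedTuple C b := by
  intro V hfin
  haveI : FiniteDimensional C V := hfin
  set W : Submodule L M := Submodule.span L (V : Set M) with hW
  have hVW : (V : Set M) ⊆ (W : Set M) := Submodule.subset_span
  -- W is finite dimensional over L
  obtain ⟨s, hs⟩ : V.FG := Module.Finite.iff_fg.mp hfin
  haveI hWfin : FiniteDimensional L W := by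
    haveI h1 : FiniteDimensional L (Submodule.span L (s : Set M)) :=
      FiniteDimensional.span_of_finite L s.finite_toSet
    have hWle : W ≤ Submodule.span L (s : Set M) := by
      rw [hW, Submodule.span_le]
      intro x hx
      have hx' : x ∈ Submodule.span C (s : Set M) := by rw [hs]; exact hx
      refine Submodule.span_induction (p := fun y _ =>
          y ∈ Submodule.span L (s : Set M)) ?_ ?_ ?_ ?_ hx'
      · intro y hy; exact Submodule.subset_span hy
      · exact Submodule.zero_mem _
      · intro y z _ _ hy hz; exact Submodule.add_mem _ hy hz
      · intro a y _ hy
        have : a • y = (⟨(a : M), hCL a.2⟩ : L) • y := rfl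
        rw [this]
        exact Submodule.smul_mem _ _ hy
    exact Submodule.finiteDimensional_of_le hWle
  obtain ⟨m, e, heli, hespan, hesep⟩ := hML W hWfin
  have hSmem : ∀ y ∈ V, y ∈ Submodule.span L (Set.range e) := by
    intro y hy; rw [hespan]; exact hVW hy
  -- expansion in the basis e
  have hexp : ∀ w : Submodule.span L (Set.range e),
      (w : M) = ∑ i, ((heli.repr w i : L) : M) * e i := by
    intro w
    have h1 := heli.linearCombination_repr w
    rw [Finsupp.linearCombination_apply, Finsupp.sum_fintype] at h1
    · rw [← h1]; rfl
    · intro i; exact zero_smul _ _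
  -- the coefficient maps
  set T : Fin m → (V →ₗ[C] M) := fun i =>
    { toFun := fun x => ((heli.repr ⟨(x : M), hSmem x x.2⟩ i : L) : M)
      map_add' := by
        intro x y
        have hxy : (⟨((x + y : V) : M), hSmem _ (x + y).2⟩ :
            Submodule.span L (Set.range e))
            = ⟨(x : M), hSmem x x.2⟩ + ⟨(y : M), hSmem y y.2⟩ := rfl
        rw [hxy, map_add, Finsupp.add_apply]
        push_cast
        ring
      map_smul' := by
        intro a x
        have hax : (⟨((a • x : V) : M), hSmem _ (a • x).2⟩ :
            Submodule.span L (Set.range e))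
            = (⟨(a : M), hCL a.2⟩ : L) • ⟨(x : M), hSmem x x.2⟩ := rfl
        rw [hax, map_smul, Finsupp.smul_apply]
        simp only [RingHom.id_apply]
        rfl } with hT
  set U : Fin m → Submodule C M := fun i => LinearMap.range (T i) with hU
  haveI hUfin : ∀ i, FiniteDimensional C (U i) := fun i =>
    LinearMap.finiteDimensional_range (T i)
  have hUL : ∀ i, ((U i : Set M)) ⊆ (L : Set M) := by
    rintro i _ ⟨x, rfl⟩
    exact SetLike.coe_mem (heli.repr ⟨(x : M), hSmem x x.2⟩ i)
  have hf : ∀ i : Fin m, ∃ (k : ℕ) (f : Fin k → M), LinearIndependent C f ∧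
      Submodule.span C (Set.range f) = U i ∧ v.IsSeparatedTuple C f :=
    fun i => hLC (U i) (hUfin i) (hUL i)
  choose nf f hfli hfspan hfsep using hf
  have hfL : ∀ (i : Fin m) (t : Fin (nf i)), f i t ∈ L := by
    intro i t
    apply hUL i
    rw [← hfspan i]
    exact Submodule.subset_span (Set.mem_range_self t)
  -- the product family, indexed by a sigma type
  set P := ((i : Fin m) × Fin (nf i)) with hP
  set h : P → M := fun p => f p.1 p.2 * e p.1 with hh
  have hh0 : ∀ p : P, h p ≠ 0 := fun p =>
    mul_ne_zero ((hfli p.1).ne_zero p.2) (heli.ne_zero p.1)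
  -- separatedness of the product family over C (sigma level)
  have hhsep : ∀ cp : P → C, v (∑ p : P, (cp p : M) * h p)
      = Finset.univ.sup fun p : P => v (cp p : M) * v (h p) := by
    intro cp
    set A : Fin m → L := fun i =>
      ⟨∑ t, (cp ⟨i, t⟩ : M) * f i t, Subfield.sum_mem L fun t _ =>
        Subfield.mul_mem L (hCL (cp ⟨i, t⟩).2) (hfL i t)⟩ with hA
    have hsum : (∑ p : P, (cp p : M) * h p) = ∑ i, ((A i : L) : M) * e i := by
      rw [← Finset.univ_sigma_univ, ← Finset.sum_sigma'
        (f := fun i t => ((cp ⟨i, t⟩ : C) : M) * h ⟨i, t⟩)]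
      congr 1; funext i
      rw [hA]
      simp only [hh]
      rw [Finset.sum_mul]
      congr 1; funext t
      ring
    rw [hsum, hesep A]
    have hAi : ∀ i, v ((A i : L) : M)
        = Finset.univ.sup fun t => v ((cp ⟨i, t⟩ : C) : M) * v (f i t) := by
      intro i
      rw [hA]
      exact hfsep i (fun t => cp ⟨i, t⟩)
    rw [← Finset.univ_sigma_univ, Finset.sup_sigma]
    congr 1; funext i
    rw [hAi i, sup_mul_right]
    congr 1; funext t
    rw [hh]
    simp only
    rw [v.map_mul, mul_assoc]
  -- V is contained in the span of the product family
  have hVle : V ≤ Submodule.span C (Set.range h) := by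
    intro x hxV
    have hxS : x ∈ Submodule.span L (Set.range e) := hSmem x hxV
    have hx1 : x = ∑ i, ((heli.repr ⟨x, hxS⟩ i : L) : M) * e i := hexp ⟨x, hxS⟩
    have hmem : ∀ i, ((heli.repr ⟨x, hxS⟩ i : L) : M)
        ∈ Submodule.span C (Set.range (f i)) := by
      intro i
      rw [hfspan i]
      exact ⟨⟨x, hxV⟩, rfl⟩
    have hq : ∀ i, ∃ q : Fin (nf i) → C,
        (∑ t, (q t : M) * f i t) = ((heli.repr ⟨x, hxS⟩ i : L) : M) := by
      intro i
      obtain ⟨q, hq⟩ := (Submodule.mem_span_range_iff_exists_fun C).1 (hmem i)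
      exact ⟨q, by rw [← hq]; rfl⟩
    choose q hqe using hq
    rw [Submodule.mem_span_range_iff_exists_fun C]
    refine ⟨fun p => q p.1 p.2, ?_⟩
    simp only [sf_smul]
    rw [← Finset.univ_sigma_univ, ← Finset.sum_sigma'
      (f := fun i t => ((q i t : C) : M) * h ⟨i, t⟩)]
    rw [hx1]
    congr 1; funext i
    rw [← hqe i, Finset.sum_mul]
    congr 1; funext t
    simp only [hh]
    ring
  -- reindex by Fin
  set σ : Fin (Fintype.card P) ≃ P := (Fintype.equivFin P).symm with hσ
  set g : Fin (Fintype.card P) → M := fun j => h (σ j) with hg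
  have hgrange : Set.range g = Set.range h := σ.surjective.range_comp h
  have hg0 : ∀ j, g j ≠ 0 := fun j => hh0 (σ j)
  have hgsep : v.IsSeparatedTuple C g := by
    intro cN
    have h1 : (∑ j, (cN j : M) * g j) = ∑ p : P, ((cN (σ.symm p) : C) : M) * h p := by
      rw [← Equiv.sum_comp σ (fun p => ((cN (σ.symm p) : C) : M) * h p)]
      congr 1; funext j
      simp [hg]
    have h2 : (Finset.univ.sup fun j => v (cN j : M) * v (g j))
        = Finset.univ.sup fun p : P => v ((cN (σ.symm p) : C) : M) * v (h p) := by
      rw [← sup_univ_equiv σ (fun p => v ((cN (σ.symm p) : C) : M) * v (h p))]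
      congr 1; funext j
      simp [hg]
    rw [h1, h2]
    exact hhsep (fun p => cN (σ.symm p))
  have hVle' : V ≤ Submodule.span C (Set.range g) := by
    rw [hgrange]; exact hVle
  exact subspace_separated v C _ g hg0 hgsep V hVle'
end

section
/- Let (N, v) be a valued field and let C, F, L, L' be subfields of N with C ⊆ F, C ⊆ L, C ⊆ L'. Let σ : L → L' be a ring isomorphism fixing C pointwise and preserving the valuation (v(σ(x)) = v(x) for all x ∈ L), and let τ : F[L] → F[L'] be a ring isomorphism between the F-subalgebras of N generated by L and by L' such that τ extends σ and fixes F pointwise. Assume that every element d of F[L] admits a separated representation from L over F, and that every element of F[L'] admits a separated representation from L' over F. Then τ preserves the valuation: v(τ(d)) = v(d) for all d ∈ F[L]; in particular τ extends to a valued field isomorphism between the composita LF and L'F inside the algebraic setting of N. -/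
/-!
STATEMENT 4: Let (N,v) be a valued field, C ⊆ F, C ⊆ L, C ⊆ L' subfields of N,
σ : L → L' a valuation-preserving ring isomorphism fixing C pointwise, and
τ : F[L] → F[L'] a ring isomorphism extending σ and fixing F pointwise.
If every element of F[L] (resp. F[L']) admits a separated representation from L
(resp. L') over F, then τ preserves the valuation: v(τ d) = v d for all d ∈ F[L].

Here F[L] is the subring of N generated by F ∪ L, and "d admits a separated
representation from L over F" means d = ∑ fᵢlᵢ with fᵢ ∈ F, lᵢ ∈ L and
(multiplicatively) v d = supᵢ (v fᵢ * v lᵢ).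
-/

variable {N Γ : Type*} [Field N] [LinearOrderedCommGroupWithZero Γ]

/-- The `F`-subalgebra `F[L]` of `N` generated by the subfields `F` and `L`,
as a subring of `N`. -/
def Subfield.adjoinSubfield (F L : Subfield N) : Subring N :=
  Subring.closure ((F : Set N) ∪ (L : Set N))

/-- `d` admits a separated representation from `L` over `F`. -/
def Valuation.HasSeparatedRepresentation (v : Valuation N Γ) (F L : Subfield N) (d : N) : Prop :=
  ∃ (k : ℕ) (f l : Fin k → N), (∀ i, f i ∈ F) ∧ (∀ i, l i ∈ L) ∧
    d = ∑ i, f i * l i ∧ v d = Finset.univ.sup fun i => v (f i) * v (l i)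


lemma memF {F L : Subfield N} {x : N} (hx : x ∈ F) : x ∈ Subfield.adjoinSubfield F L :=
  Subring.subset_closure (Or.inl hx)

lemma memL {F L : Subfield N} {x : N} (hx : x ∈ L) : x ∈ Subfield.adjoinSubfield F L :=
  Subring.subset_closure (Or.inr hx)

lemma aux_le (v : Valuation N Γ) (F L L' : Subfield N) (σ : L ≃+* L')
    (hσv : ∀ x : L, v ((σ x : L') : N) = v (x : N))
    (τ : Subfield.adjoinSubfield F L ≃+* Subfield.adjoinSubfield F L')
    (hτF : ∀ (x : N) (hx : x ∈ Subfield.adjoinSubfield F L), x ∈ F →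
      ((τ ⟨x, hx⟩ : Subfield.adjoinSubfield F L') : N) = x)
    (hτσ : ∀ (x : N) (hxL : x ∈ L) (hx : x ∈ Subfield.adjoinSubfield F L),
      ((τ ⟨x, hx⟩ : Subfield.adjoinSubfield F L') : N) = ((σ ⟨x, hxL⟩ : L') : N))
    (hrep : ∀ d : Subfield.adjoinSubfield F L, v.HasSeparatedRepresentation F L (d : N)) :
    ∀ d : Subfield.adjoinSubfield F L,
      v ((τ d : Subfield.adjoinSubfield F L') : N) ≤ v (d : N) := by
  intro d
  obtain ⟨k, f, l, hf, hl, hsum, hval⟩ := hrep d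
  have hd : d = ∑ i, (⟨f i, memF (hf i)⟩ : Subfield.adjoinSubfield F L) * ⟨l i, memL (hl i)⟩ := by
    apply Subtype.ext
    push_cast
    exact hsum
  have hτd : ((τ d : Subfield.adjoinSubfield F L') : N)
      = ∑ i, f i * ((σ ⟨l i, hl i⟩ : L') : N) := by
    rw [hd, map_sum]
    push_cast
    refine Finset.sum_congr rfl fun i _ => ?_
    rw [map_mul]
    push_cast
    rw [hτF (f i) _ (hf i), hτσ (l i) (hl i)]
  rw [hτd, hval]
  apply v.map_sum_le
  intro i _
  rw [v.map_mul, hσv]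
  exact Finset.le_sup (f := fun i => v (f i) * v (l i)) (Finset.mem_univ i)

theorem valuation_preserved_by_isomorphism_of_separated_composita
    (v : Valuation N Γ) (C F L L' : Subfield N)
    (hCF : C ≤ F) (hCL : C ≤ L) (hCL' : C ≤ L')
    (σ : L ≃+* L')
    (hσC : ∀ x : L, (x : N) ∈ C → ((σ x : L') : N) = (x : N))
    (hσv : ∀ x : L, v ((σ x : L') : N) = v (x : N))
    (τ : Subfield.adjoinSubfield F L ≃+* Subfield.adjoinSubfield F L')
    (hτF : ∀ (x : N) (hx : x ∈ Subfield.adjoinSubfield F L), x ∈ F →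
      ((τ ⟨x, hx⟩ : Subfield.adjoinSubfield F L') : N) = x)
    (hτσ : ∀ (x : N) (hxL : x ∈ L) (hx : x ∈ Subfield.adjoinSubfield F L),
      ((τ ⟨x, hx⟩ : Subfield.adjoinSubfield F L') : N) = ((σ ⟨x, hxL⟩ : L') : N))
    (hrep : ∀ d : Subfield.adjoinSubfield F L, v.HasSeparatedRepresentation F L (d : N))
    (hrep' : ∀ d : Subfield.adjoinSubfield F L', v.HasSeparatedRepresentation F L' (d : N)) :
    ∀ d : Subfield.adjoinSubfield F L,
      v ((τ d : Subfield.adjoinSubfield F L') : N) = v (d : N) := by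
  
  intro d
  refine le_antisymm (aux_le v F L L' σ hσv τ hτF hτσ hrep d) ?_
  have hσv' : ∀ y : L', v ((σ.symm y : L) : N) = v (y : N) := by
    intro y
    conv_rhs => rw [← σ.apply_symm_apply y]
    rw [hσv]
  have hτF' : ∀ (x : N) (hx : x ∈ Subfield.adjoinSubfield F L'), x ∈ F →
      ((τ.symm ⟨x, hx⟩ : Subfield.adjoinSubfield F L) : N) = x := by
    intro x hx hxF
    have h1 : τ ⟨x, memF hxF⟩ = ⟨x, hx⟩ := Subtype.ext (hτF x (memF hxF) hxF)
    rw [← h1, τ.symm_apply_apply]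
  have hτσ' : ∀ (x : N) (hxL : x ∈ L') (hx : x ∈ Subfield.adjoinSubfield F L'),
      ((τ.symm ⟨x, hx⟩ : Subfield.adjoinSubfield F L) : N) = ((σ.symm ⟨x, hxL⟩ : L) : N) := by
    intro x hxL hx
    set y : L := σ.symm ⟨x, hxL⟩ with hy
    have hyL : (y : N) ∈ L := y.2
    have h1 : τ ⟨(y : N), memL hyL⟩ = ⟨x, hx⟩ := by
      apply Subtype.ext
      rw [hτσ (y : N) hyL (memL hyL)]
      have : (⟨(y : N), hyL⟩ : L) = y := Subtype.ext rfl
      rw [this, hy, σ.apply_symm_apply]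
    rw [← h1, τ.symm_apply_apply]
  have := aux_le v F L' L σ.symm hσv' τ.symm hτF' hτσ' hrep' (τ d)
  rwa [τ.symm_apply_apply] at this
end

section
/- Let (L, v) be a henselian valued field of equicharacteristic zero (the valuation ring O_L of L is a henselian local ring, and both L and its residue field k_L have characteristic zero), and let C be a subfield of L with the restricted valuation, residue field k_C (the image of O_L ∩ C under the residue map). Assume C is relatively algebraically closed in L, i.e., every element of L that is algebraic over C belongs to C. Then k_C is relatively algebraically closed in k_L: every element of k_L that is algebraic over k_C belongs to k_C. -/
/-!
STATEMENT 6: Let (L,v) be a henselian valued field of equicharacteristic zero,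
and C ⊆ L a subfield that is relatively algebraically closed in L. Then the
residue field k_C of C (the image of O_L ∩ C under the residue map) is
relatively algebraically closed in k_L.

"Henselian" is expressed as `HenselianLocalRing v.valuationSubring`;
"x is algebraic over the subfield C" is expressed by the existence of a nonzero
polynomial with coefficients in C vanishing at x.
-/

variable {L Γ : Type*} [Field L] [LinearOrderedCommGroupWithZero Γ]

/-- The residue field of a subfield `C` of the valued field `L`: the image of
`O_L ∩ C` under the residue map, as a subring of the residue field of `L`. -/
def residueOfSubfield (v : Valuation L Γ) (C : Subfield L) :
    Subring (IsLocalRing.ResidueField v.valuationSubring) :=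
  Subring.map (IsLocalRing.residue v.valuationSubring)
    (Subring.comap v.valuationSubring.subtype C.toSubring)

private lemma map_eval_eq' {A B : Type*} [CommRing A] [CommRing B] (g : A →+* B)
    (p : Polynomial A) (a : A) :
    Polynomial.eval (g a) (p.map g) = g (Polynomial.eval a p) := by
  rw [Polynomial.eval_map]; exact Polynomial.eval₂_at_apply g a

theorem residue_of_relatively_algebraically_closed
    (v : Valuation L Γ)
    [HenselianLocalRing v.valuationSubring]
    [CharZero L] [CharZero (IsLocalRing.ResidueField v.valuationSubring)]
    (C : Subfield L)
    (hC : ∀ x : L, (∃ p : Polynomial L, p ≠ 0 ∧ (∀ i, p.coeff i ∈ C) ∧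
        Polynomial.eval x p = 0) → x ∈ C) :
    ∀ y : IsLocalRing.ResidueField v.valuationSubring,
      (∃ p : Polynomial (IsLocalRing.ResidueField v.valuationSubring), p ≠ 0 ∧
        (∀ i, p.coeff i ∈ residueOfSubfield v C) ∧ Polynomial.eval y p = 0) →
      y ∈ residueOfSubfield v C := by
  classical
  set R := v.valuationSubring with hR
  set K := residueOfSubfield v C with hKdef
  -- K is closed under inverses
  have hinv : ∀ u : IsLocalRing.ResidueField R, u ∈ K → u ≠ 0 → u⁻¹ ∈ K := by
    rintro u hu hu0
    obtain ⟨x, hxC, rfl⟩ := hu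
    have hxu : IsUnit x := by
      by_contra h
      exact hu0 ((Ideal.Quotient.eq_zero_iff_mem).mpr h)
    obtain ⟨xi, hxi⟩ := hxu.exists_right_inv
    have hx1 : ((x : R) : L) * ((xi : R) : L) = 1 := by
      exact_mod_cast congrArg (fun t : R => (t : L)) hxi
    have hinvC : ((xi : R) : L) ∈ C := by
      have : ((xi : R) : L) = ((x : R) : L)⁻¹ :=
        eq_inv_of_mul_eq_one_left (by rw [mul_comm]; exact hx1)
      rw [this]
      exact C.inv_mem hxC
    refine ⟨xi, hinvC, ?_⟩
    have : IsLocalRing.residue R xi * IsLocalRing.residue R x = 1 := by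
      rw [← map_mul, mul_comm, hxi, map_one]
    exact eq_inv_of_mul_eq_one_left this
  intro y hy
  -- pick a polynomial of minimal degree witnessing algebraicity of y
  have hex : ∃ n : ℕ, ∃ p : Polynomial (IsLocalRing.ResidueField R), p ≠ 0 ∧
      (∀ i, p.coeff i ∈ K) ∧ Polynomial.eval y p = 0 ∧ p.natDegree = n := by
    obtain ⟨p, h1, h2, h3⟩ := hy
    exact ⟨p.natDegree, p, h1, h2, h3, rfl⟩
  obtain ⟨p, hp0, hpK, hpy, hpn⟩ := Nat.find_spec hex
  -- p has positive degree
  have hdeg : p.natDegree ≠ 0 := by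
    intro h
    obtain ⟨a, rfl⟩ := Polynomial.natDegree_eq_zero.mp h
    rw [Polynomial.eval_C] at hpy
    exact hp0 (by rw [hpy, map_zero])
  -- the derivative does not vanish at y, by minimality
  have hder0 : Polynomial.derivative p ≠ 0 := fun h =>
    hdeg (Polynomial.natDegree_eq_zero_of_derivative_eq_zero h)
  have hderK : ∀ i, (Polynomial.derivative p).coeff i ∈ K := by
    intro i
    rw [Polynomial.coeff_derivative]
    exact mul_mem (hpK _) (by exact_mod_cast natCast_mem K (i + 1))
  have hdery : Polynomial.eval y (Polynomial.derivative p) ≠ 0 := by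
    intro h
    exact Nat.find_min hex (hpn ▸ Polynomial.natDegree_derivative_lt hdeg)
      ⟨Polynomial.derivative p, hder0, hderK, h, rfl⟩
  -- normalize to a monic polynomial q with coefficients in K
  set q : Polynomial (IsLocalRing.ResidueField R) :=
    p * Polynomial.C p.leadingCoeff⁻¹ with hq
  have hlc : p.leadingCoeff ≠ 0 := Polynomial.leadingCoeff_ne_zero.mpr hp0
  have hlcinvK : p.leadingCoeff⁻¹ ∈ K := hinv _ (hpK _) hlc
  have hqmonic : q.Monic := Polynomial.monic_mul_leadingCoeff_inv hp0
  have hqK : ∀ i, q.coeff i ∈ K := by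
    intro i
    rw [hq, Polynomial.coeff_mul_C]
    exact mul_mem (hpK i) hlcinvK
  have hqy : Polynomial.eval y q = 0 := by
    rw [hq, Polynomial.eval_mul, hpy, zero_mul]
  have hqdery : Polynomial.eval y (Polynomial.derivative q) ≠ 0 := by
    rw [hq, Polynomial.derivative_mul, Polynomial.derivative_C, mul_zero, add_zero,
      Polynomial.eval_mul, Polynomial.eval_C]
    exact mul_ne_zero hdery (inv_ne_zero hlc)
  -- lift q to a monic polynomial over the subring R₀ = O_L ∩ C
  set R₀ : Subring R := Subring.comap R.subtype C.toSubring with hR₀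
  set f : R₀ →+* IsLocalRing.ResidueField R :=
    (IsLocalRing.residue R).comp R₀.subtype with hf
  have hqlifts : q ∈ Polynomial.lifts f := by
    rw [Polynomial.lifts_iff_coeff_lifts]
    intro n
    obtain ⟨x, hx, hfx⟩ := hqK n
    exact ⟨⟨x, hx⟩, hfx⟩
  obtain ⟨Q, hQmap, _, hQmonic⟩ :=
    Polynomial.lifts_and_degree_eq_and_monic hqlifts hqmonic
  -- apply Hensel's lemma
  set P : Polynomial R := Q.map R₀.subtype with hP
  have hPmonic : P.Monic := hQmonic.map _
  have hPres : P.map (IsLocalRing.residue R) = q := by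
    rw [hP, Polynomial.map_map]
    exact hQmap
  obtain ⟨a₀, ha₀⟩ := IsLocalRing.residue_surjective (R := R) y
  have heval : ∀ b : R, IsLocalRing.residue R (Polynomial.eval b P) =
      Polynomial.eval (IsLocalRing.residue R b) q := by
    intro b
    rw [← hPres]
    exact (map_eval_eq' (IsLocalRing.residue R) P b).symm
  have h1 : Polynomial.eval a₀ P ∈ IsLocalRing.maximalIdeal R := by
    rw [← Ideal.Quotient.eq_zero_iff_mem]
    show IsLocalRing.residue R _ = 0
    rw [heval, ha₀, hqy]
  have hevald : IsLocalRing.residue R (Polynomial.eval a₀ (Polynomial.derivative P)) =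
      Polynomial.eval y (Polynomial.derivative q) := by
    have h := map_eval_eq' (IsLocalRing.residue R) (Polynomial.derivative P) a₀
    rw [← Polynomial.derivative_map, hPres, ha₀] at h
    exact h.symm
  have h2 : IsUnit (Polynomial.eval a₀ (Polynomial.derivative P)) := by
    by_contra h
    apply hqdery
    rw [← hevald]
    exact (Ideal.Quotient.eq_zero_iff_mem).mpr h
  obtain ⟨a, haroot, hamem⟩ := HenselianLocalRing.is_henselian P hPmonic a₀ h1 h2
  have hares : IsLocalRing.residue R a = y := by
    rw [← ha₀]
    exact (Ideal.Quotient.mk_eq_mk_iff_sub_mem a a₀).mpr hamem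
  -- a lies in C since it is algebraic over C
  have haC : ((a : R) : L) ∈ C := by
    apply hC
    refine ⟨P.map R.subtype, ?_, ?_, ?_⟩
    · exact (hPmonic.map _).ne_zero
    · intro i
      rw [hP, Polynomial.map_map, Polynomial.coeff_map]
      exact (Q.coeff i).2
    · have h := map_eval_eq' R.subtype P a
      rw [haroot] at h
      simpa using h
  exact ⟨a, haC, hares⟩
end
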